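/- Let M be a symmetric positive definite N×N real matrix, H(x) = √⟨Mx,x⟩, H°(x) = √⟨M⁻¹x,x⟩, T_H(x) = Mx/⟨Mx,x⟩ and T_{H°}(y) = M⁻¹y/⟨M⁻¹y,y⟩ on ℝ^N∖{0}. Then for every y ∈ ℝ^N∖{0} and every v ∈ ℝ^N, DT_{H°}(T_H(y)) (Mv) = H(y)⁴ M⁻¹ (DT_H(y) v); equivalently, for v ≠ 0 with DT_H(y)v ≠ 0, H(v) DT_{H°}(T_H(y)) ∇H(v) = H(y)⁴ H°(DT_H(y)v) ∇H°(DT_H(y)v), where H(v)∇H(v) = Mv and H°(w)∇H°(w) = M⁻¹w. -/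

import Mathlib

open Matrix

section Aux

variable {N : ℕ}

/-- derivative of the quadratic form `z ↦ ⟨Az, z⟩`. -/
lemma hasFDerivAt_quadform (A : Matrix (Fin N) (Fin N) ℝ) (x : Fin N → ℝ) :
    HasFDerivAt (fun z => A.mulVec z ⬝ᵥ z)
      (∑ i : Fin N,
        ((A.mulVec x i) • (ContinuousLinearMap.proj i :
            (Fin N → ℝ) →L[ℝ] ℝ)
          + (x i) • ((ContinuousLinearMap.proj i).comp
              (LinearMap.toContinuousLinearMap (Matrix.mulVecLin A))))) x := by
  have h : ∀ z : Fin N → ℝ, A.mulVec z ⬝ᵥ z = ∑ i : Fin N, (A.mulVec z) i * z i := by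
    intro z; rfl
  simp only [h]
  apply HasFDerivAt.fun_sum
  intro i _
  have hL : HasFDerivAt (fun z : Fin N → ℝ => (A.mulVec z) i)
      ((ContinuousLinearMap.proj i).comp
        (LinearMap.toContinuousLinearMap (Matrix.mulVecLin A))) x := by
    have := ((ContinuousLinearMap.proj i).comp
        (LinearMap.toContinuousLinearMap (Matrix.mulVecLin A))).hasFDerivAt (x := x)
    convert this using 1
    funext z; simp [Matrix.mulVecLin_apply]
  have hP : HasFDerivAt (fun z : Fin N → ℝ => z i)
      ((ContinuousLinearMap.proj i : (Fin N → ℝ) →L[ℝ] ℝ)) x := by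
    have := (ContinuousLinearMap.proj (R := ℝ) (φ := fun _ : Fin N => ℝ) i).hasFDerivAt (x := x)
    convert this using 1
    funext z; rfl
  exact hL.mul hP

/-- derivative of the Kelvin map of a matrix `A`, evaluated at `v`. -/
lemma kelvin_fderiv (A : Matrix (Fin N) (Fin N) ℝ) (x v : Fin N → ℝ)
    (hq : A.mulVec x ⬝ᵥ x ≠ 0) :
    fderiv ℝ (fun z => (A.mulVec z ⬝ᵥ z)⁻¹ • A.mulVec z) x v =
      (A.mulVec x ⬝ᵥ x)⁻¹ • A.mulVec v
        - (((A.mulVec x ⬝ᵥ x) ^ 2)⁻¹ * (A.mulVec x ⬝ᵥ v + A.mulVec v ⬝ᵥ x)) •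
            A.mulVec x := by
  set q : ℝ := A.mulVec x ⬝ᵥ x with hqdef
  have hquad := hasFDerivAt_quadform A x
  have hinv : HasFDerivAt (fun z => (A.mulVec z ⬝ᵥ z)⁻¹)
      ((ContinuousLinearMap.smulRight (1 : ℝ →L[ℝ] ℝ) (-(q ^ 2)⁻¹)).comp
        (∑ i : Fin N,
        ((A.mulVec x i) • (ContinuousLinearMap.proj i :
            (Fin N → ℝ) →L[ℝ] ℝ)
          + (x i) • ((ContinuousLinearMap.proj i).comp
              (LinearMap.toContinuousLinearMap (Matrix.mulVecLin A)))))) x :=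
    (hasFDerivAt_inv hq).comp x hquad
  have hmv : HasFDerivAt (fun z : Fin N → ℝ => A.mulVec z)
      (LinearMap.toContinuousLinearMap (Matrix.mulVecLin A)) x := by
    have := (LinearMap.toContinuousLinearMap (Matrix.mulVecLin A)).hasFDerivAt (x := x)
    convert this using 1
    funext z; simp [Matrix.mulVecLin_apply]
  have hT := hinv.smul hmv
  rw [show (fun z => (A.mulVec z ⬝ᵥ z)⁻¹ • A.mulVec z) =
    ((fun z => (A.mulVec z ⬝ᵥ z)⁻¹) • fun z => A.mulVec z) from rfl, hT.fderiv]
  simp only [ContinuousLinearMap.add_apply, ContinuousLinearMap.smul_apply,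
    ContinuousLinearMap.smulRight_apply, ContinuousLinearMap.comp_apply,
    ContinuousLinearMap.sum_apply, ContinuousLinearMap.proj_apply,
    ContinuousLinearMap.one_apply, LinearMap.coe_toContinuousLinearMap',
    Matrix.mulVecLin_apply]
  have h1 : (∑ i : Fin N, ((A.mulVec x) i • v i + x i • (A.mulVec v) i))
      = A.mulVec x ⬝ᵥ v + A.mulVec v ⬝ᵥ x := by
    simp only [smul_eq_mul, Finset.sum_add_distrib]
    congr 1
    exact dotProduct_comm x (A.mulVec v)
  rw [h1, sub_eq_add_neg, ← neg_smul, smul_eq_mul]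
  congr 1
  ring

end Aux

/- STATEMENT 6: for H(x) = √⟨Mx,x⟩, H°(x) = √⟨M⁻¹x,x⟩, T_H(x) = Mx/⟨Mx,x⟩ and
   T_{H°}(y) = M⁻¹y/⟨M⁻¹y,y⟩ one has, for all y ≠ 0 and all v,
   DT_{H°}(T_H(y))(Mv) = H(y)⁴ M⁻¹(DT_H(y) v); equivalently (for v ≠ 0, DT_H(y)v ≠ 0)
   H(v) DT_{H°}(T_H(y)) ∇H(v) = H(y)⁴ H°(DT_H(y)v) ∇H°(DT_H(y)v),
   since H(v)∇H(v) = Mv and H°(w)∇H°(w) = M⁻¹w. -/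
theorem kelvin_map_derivative_duality {N : ℕ}
    (M : Matrix (Fin N) (Fin N) ℝ) (hM : M.PosDef)
    (H Hdual : (Fin N → ℝ) → ℝ)
    (hH : ∀ x, H x = Real.sqrt (M.mulVec x ⬝ᵥ x))
    (hHdual : ∀ x, Hdual x = Real.sqrt (M⁻¹.mulVec x ⬝ᵥ x))
    (T Tdual : (Fin N → ℝ) → (Fin N → ℝ))
    (hT : ∀ x, T x = (M.mulVec x ⬝ᵥ x)⁻¹ • M.mulVec x)
    (hTdual : ∀ y, Tdual y = (M⁻¹.mulVec y ⬝ᵥ y)⁻¹ • M⁻¹.mulVec y) :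
    ∀ y : Fin N → ℝ, y ≠ 0 → ∀ v : Fin N → ℝ,
      fderiv ℝ Tdual (T y) (M.mulVec v) =
        (H y) ^ 4 • M⁻¹.mulVec (fderiv ℝ T y v) := by
  intro y hy v
  set q : ℝ := M.mulVec y ⬝ᵥ y with hqdef
  have hdet : IsUnit M.det := isUnit_iff_ne_zero.mpr hM.det_pos.ne'
  have hMT : Mᵀ = M := by
    have := hM.1
    rwa [Matrix.IsHermitian, Matrix.conjTranspose_eq_transpose_of_trivial] at this
  have hsym : ∀ a b : Fin N → ℝ, M.mulVec a ⬝ᵥ b = a ⬝ᵥ M.mulVec b := by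
    intro a b
    rw [Matrix.dotProduct_mulVec, ← Matrix.mulVec_transpose, hMT]
  have hqpos : 0 < q := by
    have := hM.dotProduct_mulVec_pos hy
    simpa [hqdef, dotProduct_comm, hsym] using this
  have hq0 : q ≠ 0 := hqpos.ne'
  have hMinv : ∀ u : Fin N → ℝ, M⁻¹.mulVec (M.mulVec u) = u := by
    intro u
    rw [Matrix.mulVec_mulVec, Matrix.nonsing_inv_mul M hdet, Matrix.one_mulVec]
  have hTy : T y = q⁻¹ • M.mulVec y := hT y
  have hMinvw : M⁻¹.mulVec (T y) = q⁻¹ • y := by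
    rw [hTy, Matrix.mulVec_smul, hMinv]
  have hqw : M⁻¹.mulVec (T y) ⬝ᵥ (T y) = q⁻¹ := by
    rw [hMinvw, hTy, smul_dotProduct, dotProduct_smul, smul_eq_mul,
      smul_eq_mul, dotProduct_comm y (M.mulVec y)]
    rw [← hqdef]
    field_simp
  have hqw0 : M⁻¹.mulVec (T y) ⬝ᵥ (T y) ≠ 0 := by
    rw [hqw]; exact inv_ne_zero hq0
  have hTd : Tdual = fun z => (M⁻¹.mulVec z ⬝ᵥ z)⁻¹ • M⁻¹.mulVec z := funext hTdual
  have hTf : T = fun z => (M.mulVec z ⬝ᵥ z)⁻¹ • M.mulVec z := funext hT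
  have hH4 : H y ^ 4 = q ^ 2 := by
    rw [hH y, ← hqdef, show (4 : ℕ) = 2 * 2 from rfl, pow_mul, Real.sq_sqrt hqpos.le]
  rw [hTd, kelvin_fderiv M⁻¹ (T y) (M.mulVec v) hqw0, hqw, hMinv, hMinvw, hTy,
    inv_inv, hH4]
  rw [hTf, kelvin_fderiv M y v hq0]
  set d : ℝ := y ⬝ᵥ M.mulVec v with hddef
  have hd1 : M.mulVec y ⬝ᵥ v = d := by
    rw [hsym, hddef]
  have hd2 : M.mulVec v ⬝ᵥ y = d := by
    rw [dotProduct_comm, hddef]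
  have hd3 : v ⬝ᵥ M.mulVec y = d := by
    rw [← hsym, hd2]
  rw [Matrix.mulVec_sub, Matrix.mulVec_smul, Matrix.mulVec_smul, hMinv, hMinv]
  funext i
  simp only [Pi.sub_apply, Pi.smul_apply, smul_eq_mul, smul_dotProduct,
    dotProduct_smul, hd1, hd2, hd3, ← hddef, ← hqdef]
  field_simp
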